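/- arXiv:2404.16760 — 5 statements merged into one kernel-verified Lean document; each statement's English description precedes it below -/
import Mathlib

section
/- Fix an integer m ≥ 1 and let X_m = {k/m : k = 0, 1, …, m} ⊆ ℝ. For j ∈ {0, 1, …, m} define g_j(x) := (x ⊕ (m−j)/m)^{⊙m} = max(0, m·min(1, x + (m−j)/m) − (m−1)) and h_j(x) := ((1−x) ⊕ j/m)^{⊙m} = max(0, m·min(1, (1−x) + j/m) − (m−1)). Then for every x ∈ X_m: g_j(x) = 1 if x ≥ j/m and g_j(x) = 0 if x < j/m; h_j(x) = 1 if x ≤ j/m and h_j(x) = 0 if x > j/m. Moreover, for 0 ≤ j ≤ k ≤ m and x ∈ X_m, g_j(x) ⊙ h_k(x) = 1 if j/m ≤ x ≤ k/m and g_j(x) ⊙ h_k(x) = 0 otherwise. -/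
def Xm (m : ℕ) : Set ℝ := {x | ∃ k : ℕ, k ≤ m ∧ x = (k:ℝ) / m}

noncomputable def odot (x y : ℝ) : ℝ := max 0 (x + y - 1)

noncomputable def gfun (m j : ℕ) (x : ℝ) : ℝ :=
  max 0 ((m:ℝ) * min 1 (x + ((m:ℝ) - (j:ℝ)) / m) - ((m:ℝ) - 1))

noncomputable def hfun (m j : ℕ) (x : ℝ) : ℝ :=
  max 0 ((m:ℝ) * min 1 ((1 - x) + (j:ℝ) / m) - ((m:ℝ) - 1))

lemma g_eval (m j n : ℕ) (hm : 1 ≤ m) :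
    gfun m j ((n:ℝ)/m) = if j ≤ n then 1 else 0 := by
  have hm' : (0:ℝ) < m := by exact_mod_cast hm
  unfold gfun
  have hsum : (n:ℝ)/m + ((m:ℝ) - (j:ℝ))/m = ((n:ℝ) + (m:ℝ) - (j:ℝ))/m := by ring
  rw [hsum]
  by_cases h : j ≤ n
  · have hjle : (j:ℝ) ≤ n := by exact_mod_cast h
    have h1 : (1:ℝ) ≤ ((n:ℝ) + (m:ℝ) - (j:ℝ))/m := by
      rw [le_div_iff₀ hm']; linarith
    rw [min_eq_left h1, if_pos h]
    have : (m:ℝ) * 1 - ((m:ℝ) - 1) = 1 := by ring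
    rw [this]; norm_num
  · have hlt : (n:ℝ) + 1 ≤ (j:ℝ) := by exact_mod_cast Nat.succ_le_of_lt (Nat.lt_of_not_le h)
    have h1 : ((n:ℝ) + (m:ℝ) - (j:ℝ))/m ≤ 1 := by
      rw [div_le_iff₀ hm']; linarith
    rw [min_eq_right h1, if_neg h]
    rw [mul_div_cancel₀ _ (ne_of_gt hm')]
    apply max_eq_left; linarith

lemma h_eval (m j n : ℕ) (hm : 1 ≤ m) :
    hfun m j ((n:ℝ)/m) = if n ≤ j then 1 else 0 := by
  have hm' : (0:ℝ) < m := by exact_mod_cast hm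
  unfold hfun
  have hsum : (1 - (n:ℝ)/m) + (j:ℝ)/m = ((m:ℝ) - (n:ℝ) + (j:ℝ))/m := by
    field_simp
  rw [hsum]
  by_cases h : n ≤ j
  · have hjle : (n:ℝ) ≤ j := by exact_mod_cast h
    have h1 : (1:ℝ) ≤ ((m:ℝ) - (n:ℝ) + (j:ℝ))/m := by
      rw [le_div_iff₀ hm']; linarith
    rw [min_eq_left h1, if_pos h]
    have : (m:ℝ) * 1 - ((m:ℝ) - 1) = 1 := by ring
    rw [this]; norm_num
  · have hlt : (j:ℝ) + 1 ≤ (n:ℝ) := by exact_mod_cast Nat.succ_le_of_lt (Nat.lt_of_not_le h)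
    have h1 : ((m:ℝ) - (n:ℝ) + (j:ℝ))/m ≤ 1 := by
      rw [div_le_iff₀ hm']; linarith
    rw [min_eq_right h1, if_neg h]
    rw [mul_div_cancel₀ _ (ne_of_gt hm')]
    apply max_eq_left; linarith

theorem indicator_functions (m : ℕ) (hm : 1 ≤ m) (x : ℝ) (hx : x ∈ Xm m) :
    (∀ j : ℕ, j ≤ m →
      ((j:ℝ)/m ≤ x → gfun m j x = 1) ∧ (x < (j:ℝ)/m → gfun m j x = 0) ∧
      (x ≤ (j:ℝ)/m → hfun m j x = 1) ∧ ((j:ℝ)/m < x → hfun m j x = 0)) ∧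
    (∀ j k : ℕ, j ≤ k → k ≤ m →
      (((j:ℝ)/m ≤ x ∧ x ≤ (k:ℝ)/m) → odot (gfun m j x) (hfun m k x) = 1) ∧
      (¬ ((j:ℝ)/m ≤ x ∧ x ≤ (k:ℝ)/m) → odot (gfun m j x) (hfun m k x) = 0)) := by
  obtain ⟨n, hn, rfl⟩ := hx
  have hm' : (0:ℝ) < m := by exact_mod_cast hm
  have hle : ∀ j : ℕ, ((j:ℝ)/m ≤ (n:ℝ)/m ↔ j ≤ n) := by
    intro j
    rw [div_le_div_iff_of_pos_right hm', Nat.cast_le]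
  have hlt : ∀ j k : ℕ, ((j:ℝ)/m < (k:ℝ)/m ↔ j < k) := by
    intro j k
    rw [div_lt_div_iff_of_pos_right hm', Nat.cast_lt]
  constructor
  · intro j _
    refine ⟨?_, ?_, ?_, ?_⟩
    · intro h; rw [g_eval m j n hm, if_pos ((hle j).mp h)]
    · intro h; rw [g_eval m j n hm, if_neg (Nat.not_le_of_lt ((hlt n j).mp h))]
    · intro h; rw [h_eval m j n hm, if_pos (by rw [div_le_div_iff_of_pos_right hm', Nat.cast_le] at h; exact h)]
    · intro h; rw [h_eval m j n hm, if_neg (Nat.not_le_of_lt ((hlt j n).mp h))]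
  · intro j k hjk hkm
    rw [g_eval m j n hm, h_eval m k n hm]
    constructor
    · rintro ⟨h1, h2⟩
      rw [if_pos ((hle j).mp h1), if_pos ((by rw [div_le_div_iff_of_pos_right hm', Nat.cast_le] at h2; exact h2 : n ≤ k))]
      unfold odot; norm_num
    · intro h
      rw [not_and_or] at h
      rcases h with h | h
      · rw [if_neg (fun hc => h ((hle j).mpr hc))]
        unfold odot
        apply max_eq_left
        split <;> norm_num
      · have : ¬ n ≤ k := fun hc => h (by rw [div_le_div_iff_of_pos_right hm', Nat.cast_le]; exact hc)
        rw [if_neg this]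
        unfold odot
        apply max_eq_left
        split <;> norm_num
end

section
/- Fix an integer m ≥ 1 and a natural number n, and let X_m = {k/m : k = 0, 1, …, m} ⊆ ℝ (note that X_m is closed under neg and ⊙). The smallest set S of functions from X_m^n to X_m that contains all constant functions and all coordinate projections, and is closed under the pointwise operations f ↦ neg∘f and (f, g) ↦ f ⊙ g (pointwise), is the set of ALL functions from X_m^n to X_m. -/
lemma zero_mem_Xm {m : ℕ} : (0:ℝ) ∈ Xm m := ⟨0, Nat.zero_le _, by simp⟩

lemma one_mem_Xm {m : ℕ} (hm : 1 ≤ m) : (1:ℝ) ∈ Xm m :=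
  ⟨m, le_rfl, by rw [div_self]; exact_mod_cast Nat.one_le_iff_ne_zero.mp hm⟩

lemma Xm_nonneg {m : ℕ} {x : ℝ} (hx : x ∈ Xm m) : 0 ≤ x := by
  obtain ⟨k, _, rfl⟩ := hx; positivity

lemma Xm_le_one {m : ℕ} (hm : 1 ≤ m) {x : ℝ} (hx : x ∈ Xm m) : x ≤ 1 := by
  obtain ⟨k, hk, rfl⟩ := hx
  rw [div_le_one (by exact_mod_cast hm)]
  exact_mod_cast hk

lemma neg_mem_Xm {m : ℕ} (hm : 1 ≤ m) {x : ℝ} (hx : x ∈ Xm m) : 1 - x ∈ Xm m := by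
  obtain ⟨k, hk, rfl⟩ := hx
  refine ⟨m - k, Nat.sub_le _ _, ?_⟩
  have hm0 : (m:ℝ) ≠ 0 := by exact_mod_cast Nat.one_le_iff_ne_zero.mp hm
  rw [Nat.cast_sub hk]
  field_simp

lemma odot_mem_Xm {m : ℕ} (hm : 1 ≤ m) {x y : ℝ} (hx : x ∈ Xm m) (hy : y ∈ Xm m) :
    max 0 (x + y - 1) ∈ Xm m := by
  obtain ⟨k, hk, rfl⟩ := hx
  obtain ⟨l, hl, rfl⟩ := hy
  have hm0 : (0:ℝ) < m := by exact_mod_cast hm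
  rcases le_or_gt (k + l) m with h | h
  · rw [max_eq_left]
    · exact zero_mem_Xm
    · have : (k:ℝ) + l ≤ m := by exact_mod_cast h
      rw [sub_nonpos, ← add_div, div_le_one hm0]
      exact this
  · refine Set.mem_of_eq_of_mem ?_ (⟨k + l - m, by omega, rfl⟩ : _ ∈ Xm m)
    rw [max_eq_right]
    · rw [Nat.cast_sub (by omega)]
      push_cast
      field_simp
    · have : (m:ℝ) < k + l := by exact_mod_cast h
      rw [sub_nonneg, ← add_div, le_div_iff₀ hm0, one_mul]
      linarith

lemma Xm_finite {m : ℕ} : (Xm m).Finite := by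
  have : Xm m ⊆ (fun k : ℕ => (k:ℝ)/m) '' (Set.Iic m) := by
    rintro x ⟨k, hk, rfl⟩; exact ⟨k, hk, rfl⟩
  exact ((Set.finite_Iic m).image _).subset this

theorem representability (m n : ℕ) (hm : 1 ≤ m)
    (S : Set ((Fin n → Xm m) → Xm m))
    (hconst : ∀ c : Xm m, (fun _ => c) ∈ S)
    (hproj : ∀ i : Fin n, (fun v => v i) ∈ S)
    (hneg : ∀ f ∈ S, ∀ g : (Fin n → Xm m) → Xm m,
      (∀ v, (g v : ℝ) = 1 - (f v : ℝ)) → g ∈ S)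
    (hodot : ∀ f ∈ S, ∀ g ∈ S, ∀ h : (Fin n → Xm m) → Xm m,
      (∀ v, (h v : ℝ) = max 0 ((f v : ℝ) + (g v : ℝ) - 1)) → h ∈ S) :
    ∀ f : (Fin n → Xm m) → Xm m, f ∈ S := by
  classical
  have hm0 : (0:ℝ) < m := by exact_mod_cast hm
  -- T: real-valued representable functions
  set T : Set ((Fin n → Xm m) → ℝ) :=
    {F | ∃ g ∈ S, ∀ v, (g v : ℝ) = F v} with hT
  have Tmem : ∀ {F}, F ∈ T → ∀ v, F v ∈ Xm m := by
    rintro F ⟨g, hg, hgF⟩ v; rw [← hgF]; exact (g v).2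
  have Text : ∀ {F G : (Fin n → Xm m) → ℝ}, F ∈ T → (∀ v, F v = G v) → G ∈ T := by
    rintro F G ⟨g, hg, hgF⟩ h
    exact ⟨g, hg, fun v => (hgF v).trans (h v)⟩
  have Tconst : ∀ {c : ℝ}, c ∈ Xm m → (fun _ => c) ∈ T :=
    fun {c} hc => ⟨fun _ => ⟨c, hc⟩, hconst _, fun _ => rfl⟩
  have Tproj : ∀ i, (fun v => (v i : ℝ)) ∈ T :=
    fun i => ⟨fun v => v i, hproj i, fun _ => rfl⟩
  have Tneg : ∀ {F}, F ∈ T → (fun v => 1 - F v) ∈ T := by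
    rintro F ⟨g, hg, hgF⟩
    refine ⟨fun v => ⟨1 - (g v : ℝ), neg_mem_Xm hm (g v).2⟩,
      hneg g hg _ (fun v => rfl), fun v => ?_⟩
    show 1 - (g v : ℝ) = 1 - F v
    rw [hgF]
  have Todot : ∀ {F G}, F ∈ T → G ∈ T → (fun v => max 0 (F v + G v - 1)) ∈ T := by
    rintro F G ⟨g, hg, hgF⟩ ⟨g', hg', hg'G⟩
    refine ⟨fun v => ⟨max 0 ((g v : ℝ) + (g' v : ℝ) - 1), odot_mem_Xm hm (g v).2 (g' v).2⟩,
      hodot g hg g' hg' _ (fun v => rfl), fun v => ?_⟩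
    show max 0 ((g v : ℝ) + (g' v : ℝ) - 1) = max 0 (F v + G v - 1)
    rw [hgF, hg'G]
  have Toplus : ∀ {F G}, F ∈ T → G ∈ T → (fun v => min 1 (F v + G v)) ∈ T := by
    intro F G hF hG
    refine Text (Tneg (Todot (Tneg hF) (Tneg hG))) (fun v => ?_)
    rcases le_total (F v + G v) 1 with h | h
    · rw [max_eq_right (by linarith), min_eq_right h]; ring
    · rw [max_eq_left (by linarith), min_eq_left h]; ring
  have Tmax : ∀ {F G}, F ∈ T → G ∈ T → (fun v => max (F v) (G v)) ∈ T := by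
    intro F G hF hG
    refine Text (Toplus (Todot hF (Tneg hG)) hG) (fun v => ?_)
    have ha : F v ≤ 1 := Xm_le_one hm (Tmem hF v)
    have hb : G v ≤ 1 := Xm_le_one hm (Tmem hG v)
    rcases le_total (F v) (G v) with h | h
    · rw [max_eq_left (by linarith), max_eq_right h, zero_add, min_eq_right hb]
    · rw [max_eq_right (by linarith), max_eq_left h]
      rw [show F v + (1 - G v) - 1 + G v = F v by ring, min_eq_right ha]
  have Tmin : ∀ {F G}, F ∈ T → G ∈ T → (fun v => min (F v) (G v)) ∈ T := by
    intro F G hF hG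
    refine Text (Tneg (Tmax (Tneg hF) (Tneg hG))) (fun v => ?_)
    rcases le_total (F v) (G v) with h | h
    · rw [max_eq_left (by linarith), min_eq_left h]; ring
    · rw [max_eq_right (by linarith), min_eq_right h]; ring
  have Tscal : ∀ (j : ℕ) {F}, F ∈ T → (fun v => min 1 ((j:ℝ) * F v)) ∈ T := by
    intro j
    induction j with
    | zero =>
      intro F hF
      refine Text (Tconst zero_mem_Xm) (fun v => ?_)
      simp
    | succ j ih =>
      intro F hF
      refine Text (Toplus (ih hF) hF) (fun v => ?_)
      have ha : 0 ≤ F v := Xm_nonneg (Tmem hF v)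
      have hc : ((j:ℝ) + 1) * F v = (j:ℝ) * F v + F v := by ring
      push_cast
      rcases le_total 1 ((j:ℝ) * F v) with h | h
      · rw [min_eq_left h, min_eq_left (by linarith), min_eq_left (by nlinarith)]
      · rw [min_eq_right h, hc]
  have hdivle : ∀ a b : ℕ, ((a:ℝ)/m ≤ (b:ℝ)/m ↔ a ≤ b) := fun a b => by
    rw [div_le_div_iff_of_pos_right hm0, Nat.cast_le]
  have hdiveq : ∀ a b : ℕ, ((a:ℝ)/m = (b:ℝ)/m ↔ a = b) := fun a b => by
    constructor
    · intro h
      field_simp at h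
      exact_mod_cast h
    · intro h; rw [h]
  -- step indicator: 1 iff F v ≥ j/m
  have Tge : ∀ (j : ℕ), 1 ≤ j → j - 1 ≤ m → ∀ {F}, F ∈ T →
      (fun v => if (j:ℝ)/m ≤ F v then (1:ℝ) else 0) ∈ T := by
    intro j hj1 hjm F hF
    have hc : ((j-1:ℕ):ℝ)/m ∈ Xm m := ⟨j-1, hjm, rfl⟩
    refine Text (Tscal m (Todot hF (Tconst (neg_mem_Xm hm hc)))) (fun v => ?_)
    obtain ⟨k, hk, hFv⟩ := Tmem hF v
    rw [hFv]
    have hcast : ((j-1:ℕ):ℝ) = (j:ℝ) - 1 := by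
      rw [Nat.cast_sub hj1, Nat.cast_one]
    rw [hcast]
    have e1 : (k:ℝ)/m + (1 - ((j:ℝ) - 1)/m) - 1 = ((k:ℝ) - j + 1)/m := by
      field_simp
      ring
    rw [e1]
    rcases le_or_gt j k with h | h
    · have hjk : (j:ℝ) ≤ k := by exact_mod_cast h
      have hge : (1:ℝ) ≤ (k:ℝ) - j + 1 := by linarith
      rw [max_eq_right (by positivity), if_pos ((hdivle j k).mpr h)]
      have e2 : (m:ℝ) * (((k:ℝ) - j + 1)/m) = (k:ℝ) - j + 1 := by field_simp
      rw [e2, min_eq_left hge]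
    · have hkj : (k:ℝ) + 1 ≤ j := by exact_mod_cast h
      rw [max_eq_left (by rw [div_nonpos_iff]; right; constructor <;> linarith),
        if_neg (fun hcon => absurd ((hdivle j k).mp hcon) (by omega))]
      simp
  -- characteristic function of a value
  have Tchi : ∀ (k : ℕ), k ≤ m → ∀ {F}, F ∈ T →
      (fun v => if F v = (k:ℝ)/m then (1:ℝ) else 0) ∈ T := by
    intro k hk F hF
    have hA : (fun v => if ((k:ℕ):ℝ)/m ≤ F v then (1:ℝ) else 0) ∈ T := by
      rcases Nat.eq_zero_or_pos k with rfl | hk0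
      · refine Text (Tconst (one_mem_Xm hm)) (fun v => ?_)
        rw [if_pos]
        rw [Nat.cast_zero, zero_div]
        exact Xm_nonneg (Tmem hF v)
      · exact Tge k hk0 (by omega) hF
    have hB : (fun v => if ((k+1:ℕ):ℝ)/m ≤ F v then (1:ℝ) else 0) ∈ T :=
      Tge (k+1) (by omega) (by omega) hF
    refine Text (Tmin hA (Tneg hB)) (fun v => ?_)
    obtain ⟨l, hl, hFv⟩ := Tmem hF v
    rw [hFv]
    rcases lt_trichotomy l k with h | h | h
    · rw [if_neg (fun hcon => absurd ((hdivle k l).mp hcon) (by omega)),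
        if_neg (fun hcon => absurd ((hdivle (k+1) l).mp hcon) (by omega)),
        if_neg (fun hcon => absurd ((hdiveq l k).mp hcon) (by omega))]
      norm_num
    · rw [if_pos ((hdivle k l).mpr (by omega)),
        if_neg (fun hcon => absurd ((hdivle (k+1) l).mp hcon) (by omega)),
        if_pos ((hdiveq l k).mpr h)]
      norm_num
    · rw [if_pos ((hdivle k l).mpr (by omega)),
        if_pos ((hdivle (k+1) l).mpr (by omega)),
        if_neg (fun hcon => absurd ((hdiveq l k).mp hcon) (by omega))]
      norm_num
  -- characteristic function of a point
  have Tpoint : ∀ v₀ : Fin n → Xm m, (fun v => if v = v₀ then (1:ℝ) else 0) ∈ T := by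
    intro v₀
    have key : ∀ s : Finset (Fin n),
        (fun v => if ∀ i ∈ s, v i = v₀ i then (1:ℝ) else 0) ∈ T := by
      intro s
      induction s using Finset.induction_on with
      | empty =>
        refine Text (Tconst (one_mem_Xm hm)) (fun v => ?_)
        simp
      | @insert a s ha ih =>
        obtain ⟨k, hk, hv₀⟩ := (v₀ a).2
        refine Text (Tmin (Tchi k hk (Tproj a)) ih) (fun v => ?_)
        by_cases h1 : (v a : ℝ) = (k:ℝ)/m
        · by_cases h2 : ∀ i ∈ s, v i = v₀ i
          · rw [if_pos h1, if_pos h2, if_pos]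
            · norm_num
            · intro i hi
              rcases Finset.mem_insert.mp hi with rfl | hi'
              · exact Subtype.ext (h1.trans hv₀.symm)
              · exact h2 i hi'
          · rw [if_pos h1, if_neg h2, if_neg]
            · norm_num
            · intro hall
              exact h2 fun i hi => hall i (Finset.mem_insert_of_mem hi)
        · have hno : ¬ ∀ i ∈ insert a s, v i = v₀ i := by
            intro hall
            apply h1
            have h3 : v a = v₀ a := hall a (Finset.mem_insert_self a s)
            rw [show (v a : ℝ) = (v₀ a : ℝ) from congrArg _ h3]
            exact hv₀
          rw [if_neg h1, if_neg hno]
          split_ifs <;> norm_num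
    refine Text (key Finset.univ) (fun v => ?_)
    by_cases h : v = v₀
    · subst h
      rw [if_pos fun i _ => rfl, if_pos rfl]
    · rw [if_neg, if_neg h]
      intro hall
      exact h (funext fun i => hall i (Finset.mem_univ i))
  -- final: build any f as max of deltas
  haveI : Fintype (Xm m) := Xm_finite.fintype
  intro f
  have main : ∀ s : Finset (Fin n → Xm m),
      (fun v => if v ∈ s then (f v : ℝ) else 0) ∈ T := by
    intro s
    induction s using Finset.induction_on with
    | empty =>
      refine Text (Tconst zero_mem_Xm) (fun v => ?_)
      simp
    | @insert a s ha ih =>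
      have hdelta : (fun v => if v = a then (f a : ℝ) else 0) ∈ T := by
        refine Text (Tmin (Tpoint a) (Tconst (f a).2)) (fun v => ?_)
        by_cases h : v = a
        · rw [if_pos h, if_pos h, min_eq_right (Xm_le_one hm (f a).2)]
        · rw [if_neg h, if_neg h, min_eq_left (Xm_nonneg (f a).2)]
      refine Text (Tmax hdelta ih) (fun v => ?_)
      by_cases h : v = a
      · subst h
        rw [if_pos rfl, if_neg ha, if_pos (Finset.mem_insert_self v s),
          max_eq_left (Xm_nonneg (f v).2)]
      · rw [if_neg h]
        by_cases h2 : v ∈ s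
        · rw [if_pos h2, if_pos (Finset.mem_insert_of_mem h2),
            max_eq_right (Xm_nonneg (f v).2)]
        · rw [if_neg h2, if_neg (fun hc => by
            rcases Finset.mem_insert.mp hc with rfl | hc' <;> [exact h rfl; exact h2 hc'])]
          norm_num
  have hfT : (fun v => (f v : ℝ)) ∈ T := Text (main Finset.univ) (fun v => by simp)
  obtain ⟨g, hg, hgf⟩ := hfT
  have : g = f := funext fun v => Subtype.ext (hgf v)
  exact this ▸ hg
end

section
/- Fix integers m ≥ 1 and n ≥ 1, and let X_m = {k/m : k = 0, 1, …, m} ⊆ ℝ. For k ∈ {1, 2}, let A_k, B_k be disjoint subsets of {1, …, n}, let c_k be an integer with 1 ≤ c_k ≤ m, and let integers p_{j,k} (j ∈ A_k) and q_{j,k} (j ∈ B_k) satisfy 1 ≤ p_{j,k} ≤ c_k and 1 ≤ q_{j,k} ≤ c_k. Define f_k : X_m^n → ℝ by f_k(x) = max(0, Σ_{j∈A_k} p_{j,k}·x_j − Σ_{j∈B_k} q_{j,k}·x_j + c_k/m − Σ_{j∈A_k} p_{j,k}). If f_1(x) = f_2(x) for all x ∈ X_m^n, then A_1 = A_2, B_1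 = B_2, c_1 = c_2, p_{j,1} = p_{j,2} for all j ∈ A_1, and q_{j,1} = q_{j,2} for all j ∈ B_1. -/
/-- Auxiliary: evaluating at the indicator of `A₁` gives `c₁ ≤ c₂`, and
if moreover `c₂ ≤ c₁` then `A₂ ⊆ A₁`. -/
lemma canonical_aux (m n : ℕ) (hm : 1 ≤ m)
    (A₁ A₂ B₁ B₂ : Finset (Fin n)) (hd₁ : Disjoint A₁ B₁)
    (c₁ c₂ : ℕ) (hc₁ : 1 ≤ c₁)
    (p₁ p₂ q₁ q₂ : Fin n → ℕ)
    (hp₂ : ∀ j ∈ A₂, 1 ≤ p₂ j)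
    (heq : ∀ x : Fin n → ℝ, (∀ i, x i ∈ Xm m) →
      max 0 (∑ j ∈ A₁, (p₁ j : ℝ) * x j - ∑ j ∈ B₁, (q₁ j : ℝ) * x j
        + (c₁:ℝ)/m - ∑ j ∈ A₁, (p₁ j : ℝ)) =
      max 0 (∑ j ∈ A₂, (p₂ j : ℝ) * x j - ∑ j ∈ B₂, (q₂ j : ℝ) * x j
        + (c₂:ℝ)/m - ∑ j ∈ A₂, (p₂ j : ℝ))) :
    c₁ ≤ c₂ ∧ (c₂ ≤ c₁ → A₂ ⊆ A₁) := by
  have hm0 : (0:ℝ) < m := by exact_mod_cast Nat.lt_of_lt_of_le Nat.zero_lt_one hm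
  set x₁ : Fin n → ℝ := fun j => if j ∈ A₁ then 1 else 0 with hx₁def
  have hx₁mem : ∀ i, x₁ i ∈ Xm m := by
    intro i
    by_cases h : i ∈ A₁
    · exact ⟨m, le_rfl, by simp [hx₁def, h, div_self (ne_of_gt hm0)]⟩
    · exact ⟨0, Nat.zero_le m, by simp [hx₁def, h]⟩
  have h1 : ∑ j ∈ A₁, (p₁ j:ℝ) * x₁ j = ∑ j ∈ A₁, (p₁ j:ℝ) :=
    Finset.sum_congr rfl fun j hj => by simp [hx₁def, hj]
  have h2 : ∑ j ∈ B₁, (q₁ j:ℝ) * x₁ j = 0 :=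
    Finset.sum_eq_zero fun j hj => by
      simp [hx₁def, Finset.disjoint_right.mp hd₁ hj]
  have key := heq x₁ hx₁mem
  rw [h1, h2] at key
  have hx01 : ∀ i, 0 ≤ x₁ i ∧ x₁ i ≤ 1 := fun i => by
    by_cases h : i ∈ A₁ <;> simp [hx₁def, h]
  have hL2 : ∑ j ∈ A₂, (p₂ j:ℝ) * x₁ j - ∑ j ∈ B₂, (q₂ j:ℝ) * x₁ j
      + (c₂:ℝ)/m - ∑ j ∈ A₂, (p₂ j:ℝ)
      = (c₂:ℝ)/m - (∑ j ∈ A₂, (p₂ j:ℝ) * (1 - x₁ j) + ∑ j ∈ B₂, (q₂ j:ℝ) * x₁ j) := by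
    simp only [mul_sub, mul_one, Finset.sum_sub_distrib]
    ring
  rw [hL2] at key
  set D : ℝ := ∑ j ∈ A₂, (p₂ j:ℝ) * (1 - x₁ j) + ∑ j ∈ B₂, (q₂ j:ℝ) * x₁ j with hDdef
  have hA2nonneg : ∀ j ∈ A₂, 0 ≤ (p₂ j:ℝ) * (1 - x₁ j) := fun j _ =>
    mul_nonneg (Nat.cast_nonneg _) (by linarith [(hx01 j).2])
  have hD0 : 0 ≤ D :=
    add_nonneg (Finset.sum_nonneg hA2nonneg)
      (Finset.sum_nonneg fun j _ => mul_nonneg (Nat.cast_nonneg _) (hx01 j).1)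
  have hpos : 0 < (c₁:ℝ)/m := div_pos (by exact_mod_cast hc₁) hm0
  have hlhs : (∑ j ∈ A₁, (p₁ j:ℝ)) - 0 + (c₁:ℝ)/m - ∑ j ∈ A₁, (p₁ j:ℝ) = (c₁:ℝ)/m := by
    ring
  rw [hlhs, max_eq_right hpos.le] at key
  have h3 : (c₂:ℝ)/m - D = (c₁:ℝ)/m := by
    rcases le_or_gt ((c₂:ℝ)/m - D) 0 with h | h
    · rw [max_eq_left h] at key; linarith
    · rw [max_eq_right h.le] at key; linarith
  have hcle : (c₁:ℝ) ≤ c₂ := by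
    have : (c₁:ℝ)/m ≤ (c₂:ℝ)/m := by linarith
    exact (div_le_div_iff_of_pos_right hm0).mp this
  refine ⟨by exact_mod_cast hcle, fun hle => ?_⟩
  have hcc : (c₂:ℝ) ≤ c₁ := by exact_mod_cast hle
  have hD : D = 0 := by
    have : (c₂:ℝ)/m ≤ (c₁:ℝ)/m := by gcongr
    linarith
  have hsum0 : ∑ j ∈ A₂, (p₂ j:ℝ) * (1 - x₁ j) = 0 := by
    have h4 : 0 ≤ ∑ j ∈ A₂, (p₂ j:ℝ) * (1 - x₁ j) := Finset.sum_nonneg hA2nonneg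
    have h5 : 0 ≤ ∑ j ∈ B₂, (q₂ j:ℝ) * x₁ j :=
      Finset.sum_nonneg fun j _ => mul_nonneg (Nat.cast_nonneg _) (hx01 j).1
    have := hDdef
    linarith [hD]
  intro j hj
  have hterm := (Finset.sum_eq_zero_iff_of_nonneg hA2nonneg).mp hsum0 j hj
  by_contra hjA1
  have hx0 : x₁ j = 0 := by simp [hx₁def, hjA1]
  rw [hx0] at hterm
  have hp : (1:ℝ) ≤ p₂ j := by exact_mod_cast hp₂ j hj
  nlinarith

theorem canonical_form_unique (m n : ℕ) (hm : 1 ≤ m) (hn : 1 ≤ n)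
    (A₁ A₂ B₁ B₂ : Finset (Fin n)) (hd₁ : Disjoint A₁ B₁) (hd₂ : Disjoint A₂ B₂)
    (c₁ c₂ : ℕ) (hc₁ : 1 ≤ c₁) (hc₁m : c₁ ≤ m) (hc₂ : 1 ≤ c₂) (hc₂m : c₂ ≤ m)
    (p₁ p₂ q₁ q₂ : Fin n → ℕ)
    (hp₁ : ∀ j ∈ A₁, 1 ≤ p₁ j ∧ p₁ j ≤ c₁) (hq₁ : ∀ j ∈ B₁, 1 ≤ q₁ j ∧ q₁ j ≤ c₁)
    (hp₂ : ∀ j ∈ A₂, 1 ≤ p₂ j ∧ p₂ j ≤ c₂) (hq₂ : ∀ j ∈ B₂, 1 ≤ q₂ j ∧ q₂ j ≤ c₂)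
    (heq : ∀ x : Fin n → ℝ, (∀ i, x i ∈ Xm m) →
      max 0 (∑ j ∈ A₁, (p₁ j : ℝ) * x j - ∑ j ∈ B₁, (q₁ j : ℝ) * x j
        + (c₁:ℝ)/m - ∑ j ∈ A₁, (p₁ j : ℝ)) =
      max 0 (∑ j ∈ A₂, (p₂ j : ℝ) * x j - ∑ j ∈ B₂, (q₂ j : ℝ) * x j
        + (c₂:ℝ)/m - ∑ j ∈ A₂, (p₂ j : ℝ))) :
    A₁ = A₂ ∧ B₁ = B₂ ∧ c₁ = c₂ ∧
      (∀ j ∈ A₁, p₁ j = p₂ j) ∧ (∀ j ∈ B₁, q₁ j = q₂ j) := by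
  have hm0 : (0:ℝ) < m := by exact_mod_cast Nat.lt_of_lt_of_le Nat.zero_lt_one hm
  have aux1 := canonical_aux m n hm A₁ A₂ B₁ B₂ hd₁ c₁ c₂ hc₁ p₁ p₂ q₁ q₂
    (fun j hj => (hp₂ j hj).1) heq
  have aux2 := canonical_aux m n hm A₂ A₁ B₂ B₁ hd₂ c₂ c₁ hc₂ p₂ p₁ q₂ q₁
    (fun j hj => (hp₁ j hj).1) (fun x hx => (heq x hx).symm)
  have hcc : c₁ = c₂ := le_antisymm aux1.1 aux2.1
  have hAA : A₁ = A₂ :=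
    le_antisymm (aux2.2 hcc.le) (aux1.2 hcc.ge)
  subst hcc
  subst hAA
  -- base point
  set x₁ : Fin n → ℝ := fun j => if j ∈ A₁ then 1 else 0 with hx₁def
  have hx₁val : ∀ i, x₁ i = if i ∈ A₁ then 1 else 0 := fun i => rfl
  have hx₁mem : ∀ i, x₁ i ∈ Xm m := by
    intro i
    by_cases h : i ∈ A₁
    · exact ⟨m, le_rfl, by simp [hx₁def, h, div_self (ne_of_gt hm0)]⟩
    · exact ⟨0, Nat.zero_le m, by simp [hx₁def, h]⟩
  -- p-step
  have hpstep : ∀ j ∈ A₁, p₁ j = p₂ j := by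
    intro j hj
    set x : Fin n → ℝ := fun i => if i = j then ((m-1:ℕ):ℝ)/m else x₁ i with hxdef
    have hxmem : ∀ i, x i ∈ Xm m := by
      intro i
      by_cases h : i = j
      · exact ⟨m-1, Nat.sub_le m 1, by simp [hxdef, h]⟩
      · simpa [hxdef, h] using hx₁mem i
    have key := heq x hxmem
    have hBsum : ∀ (q : Fin n → ℕ) (B : Finset (Fin n)), Disjoint A₁ B →
        ∑ i ∈ B, (q i:ℝ) * x i = 0 := by
      intro q B hd
      refine Finset.sum_eq_zero fun i hi => ?_
      have hij : i ≠ j := fun h => (Finset.disjoint_right.mp hd hi) (h ▸ hj)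
      have hiA : i ∉ A₁ := Finset.disjoint_right.mp hd hi
      simp [hxdef, hij, hx₁def, hiA]
    have hAsum : ∀ (p : Fin n → ℕ),
        ∑ i ∈ A₁, (p i:ℝ) * x i = (p j:ℝ) * (((m-1:ℕ):ℝ)/m) + ∑ i ∈ A₁.erase j, (p i:ℝ) := by
      intro p
      rw [← Finset.add_sum_erase _ _ hj]
      congr 1
      · simp [hxdef]
      · refine Finset.sum_congr rfl fun i hi => ?_
        have hij : i ≠ j := Finset.ne_of_mem_erase hi
        have hiA : i ∈ A₁ := Finset.mem_of_mem_erase hi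
        simp [hxdef, hij, hx₁def, hiA]
    have hAfull : ∀ (p : Fin n → ℕ),
        ∑ i ∈ A₁, (p i:ℝ) = (p j:ℝ) + ∑ i ∈ A₁.erase j, (p i:ℝ) := fun p =>
      (Finset.add_sum_erase _ _ hj).symm
    have hcast : ((m-1:ℕ):ℝ) = (m:ℝ) - 1 := by
      rw [Nat.cast_sub hm, Nat.cast_one]
    have hL : ∀ (p : Fin n → ℕ),
        (p j:ℝ) * (((m-1:ℕ):ℝ)/m) + ∑ i ∈ A₁.erase j, (p i:ℝ) - 0 + (c₁:ℝ)/m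
          - ((p j:ℝ) + ∑ i ∈ A₁.erase j, (p i:ℝ)) = ((c₁:ℝ) - p j)/m := by
      intro p
      rw [hcast]
      field_simp
      ring
    rw [hAsum p₁, hAsum p₂, hAfull p₁, hAfull p₂, hBsum q₁ B₁ hd₁, hBsum q₂ B₂ hd₂,
      hL p₁, hL p₂] at key
    have h1 : (0:ℝ) ≤ ((c₁:ℝ) - p₁ j)/m := by
      apply div_nonneg _ hm0.le
      have := (hp₁ j hj).2
      have : (p₁ j:ℝ) ≤ c₁ := by exact_mod_cast this
      linarith
    have h2 : (0:ℝ) ≤ ((c₁:ℝ) - p₂ j)/m := by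
      apply div_nonneg _ hm0.le
      have := (hp₂ j hj).2
      have : (p₂ j:ℝ) ≤ c₁ := by exact_mod_cast this
      linarith
    rw [max_eq_right h1, max_eq_right h2] at key
    field_simp at key
    exact_mod_cast (by linarith : (p₁ j:ℝ) = p₂ j)
  -- q-step: for j ∉ A₁ we get the key identity
  have hqkey : ∀ j, j ∉ A₁ →
      (if j ∈ B₁ then (q₁ j:ℝ) else 0) = (if j ∈ B₂ then (q₂ j:ℝ) else 0) := by
    intro j hjA
    set x : Fin n → ℝ := fun i => if i = j then (1:ℝ)/m else x₁ i with hxdef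
    have hxmem : ∀ i, x i ∈ Xm m := by
      intro i
      by_cases h : i = j
      · exact ⟨1, hm, by simp [hxdef, h]⟩
      · simpa [hxdef, h] using hx₁mem i
    have key := heq x hxmem
    have hAsum : ∑ i ∈ A₁, (p₁ i:ℝ) * x i = ∑ i ∈ A₁, (p₁ i:ℝ) := by
      refine Finset.sum_congr rfl fun i hi => ?_
      have hij : i ≠ j := fun h => hjA (h ▸ hi)
      simp [hxdef, hij, hx₁def, hi]
    have hAsum2 : ∑ i ∈ A₁, (p₂ i:ℝ) * x i = ∑ i ∈ A₁, (p₂ i:ℝ) := by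
      refine Finset.sum_congr rfl fun i hi => ?_
      have hij : i ≠ j := fun h => hjA (h ▸ hi)
      simp [hxdef, hij, hx₁def, hi]
    have hBsum : ∀ (q : Fin n → ℕ) (B : Finset (Fin n)), Disjoint A₁ B →
        ∑ i ∈ B, (q i:ℝ) * x i = (if j ∈ B then (q j:ℝ) else 0)/m := by
      intro q B hd
      by_cases hjB : j ∈ B
      · rw [← Finset.add_sum_erase _ _ hjB, if_pos hjB]
        have : ∑ i ∈ B.erase j, (q i:ℝ) * x i = 0 := by
          refine Finset.sum_eq_zero fun i hi => ?_
          have hij : i ≠ j := Finset.ne_of_mem_erase hi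
          have hiA : i ∉ A₁ := Finset.disjoint_right.mp hd (Finset.mem_of_mem_erase hi)
          simp [hxdef, hij, hx₁def, hiA]
        rw [this]
        simp [hxdef, div_eq_mul_inv]
      · rw [if_neg hjB]
        have : ∑ i ∈ B, (q i:ℝ) * x i = 0 := by
          refine Finset.sum_eq_zero fun i hi => ?_
          have hij : i ≠ j := fun h => hjB (h ▸ hi)
          have hiA : i ∉ A₁ := Finset.disjoint_right.mp hd hi
          simp [hxdef, hij, hx₁def, hiA]
        rw [this, zero_div]
    rw [hAsum, hAsum2, hBsum q₁ B₁ hd₁, hBsum q₂ B₂ hd₂] at key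
    have hL : ∀ (S : Finset (Fin n)) (v : ℝ),
        ∑ i ∈ A₁, (v:ℝ) = v → True := fun _ _ _ => trivial
    have hLe : ∀ (p : Fin n → ℕ) (t : ℝ),
        ∑ i ∈ A₁, (p i:ℝ) - t/m + (c₁:ℝ)/m - ∑ i ∈ A₁, (p i:ℝ) = ((c₁:ℝ) - t)/m := by
      intro p t; field_simp; ring
    rw [hLe p₁ _, hLe p₂ _] at key
    have hb1 : (if j ∈ B₁ then (q₁ j:ℝ) else 0) ≤ c₁ := by
      split
      · next h => exact_mod_cast (hq₁ j h).2
      · positivity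
    have hb2 : (if j ∈ B₂ then (q₂ j:ℝ) else 0) ≤ c₁ := by
      split
      · next h => exact_mod_cast (hq₂ j h).2
      · positivity
    rw [max_eq_right (by apply div_nonneg _ hm0.le; linarith),
        max_eq_right (by apply div_nonneg _ hm0.le; linarith)] at key
    field_simp at key
    linarith
  have hBB : B₁ = B₂ := by
    ext j
    by_cases hjA : j ∈ A₁
    · simp [Finset.disjoint_left.mp hd₁ hjA, Finset.disjoint_left.mp hd₂ hjA]
    · have := hqkey j hjA
      constructor
      · intro h
        by_contra h2
        rw [if_pos h, if_neg h2] at this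
        have : (1:ℝ) ≤ 0 := le_trans (by exact_mod_cast (hq₁ j h).1) this.le
        linarith
      · intro h
        by_contra h2
        rw [if_neg h2, if_pos h] at this
        have : (1:ℝ) ≤ 0 := le_trans (by exact_mod_cast (hq₂ j h).1) this.ge
        linarith
  refine ⟨rfl, hBB, rfl, hpstep, ?_⟩
  intro j hj
  have hjA : j ∉ A₁ := Finset.disjoint_right.mp hd₁ hj
  have := hqkey j hjA
  rw [if_pos hj, if_pos (hBB ▸ hj)] at this
  exact_mod_cast this
end

section
/- Let A and B be types, F : A → A, G : A × B → A × B, and U : A → B, and assume: (i) for all a ∈ A, the first component of G(a, U(a)) equals F(a); (ii) for all a ∈ A, the second component of G(a, U(a)) equals U(a); (iii) for all a ∈ A and b ∈ B, if the second component of G(a, b) equals b, then b = U(a). Then a point (a, b) ∈ A × B is a fixed point of G if and only if b = U(a) and a is a fixed point of F; consequently the map a ↦ (a, U(a)) is a bijection from the set of fixed points of F onto the set of fixed points of G, with inverse the projection onto the first coordinate. -/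
theorem fixed_points_bijection {A B : Type*} (F : A → A) (G : A × B → A × B)
    (U : A → B)
    (h1 : ∀ a : A, (G (a, U a)).1 = F a)
    (h2 : ∀ a : A, (G (a, U a)).2 = U a)
    (h3 : ∀ (a : A) (b : B), (G (a, b)).2 = b → b = U a) :
    (∀ (a : A) (b : B), G (a, b) = (a, b) ↔ b = U a ∧ F a = a) ∧
    Set.BijOn (fun a => (a, U a)) {a : A | F a = a} {z : A × B | G z = z} ∧
    Set.InvOn Prod.fst (fun a => (a, U a)) {a : A | F a = a} {z : A × B | G z = z} := by
  have key : ∀ (a : A) (b : B), G (a, b) = (a, b) ↔ b = U a ∧ F a = a := by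
    intro a b
    constructor
    · intro h
      have hb : b = U a := h3 a b (by rw [h])
      subst hb
      refine ⟨rfl, ?_⟩
      rw [← h1 a, h]
    · rintro ⟨hb, hF⟩
      subst hb
      have := h1 a
      have := h2 a
      ext <;> simp_all
  refine ⟨key, ⟨?_, ?_, ?_⟩, ?_, ?_⟩
  · intro a ha
    exact (key a (U a)).mpr ⟨rfl, ha⟩
  · intro a _ a' _ h
    exact congrArg Prod.fst h
  · rintro ⟨a, b⟩ hz
    obtain ⟨hb, hF⟩ := (key a b).mp hz
    exact ⟨a, hF, by simp [hb]⟩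
  · intro a _; rfl
  · rintro ⟨a, b⟩ hz
    obtain ⟨hb, _⟩ := (key a b).mp hz
    simp [hb]
end

section
/- Let n ≥ 1, let L be a real n × n matrix and b ∈ ℝ^n, and define affine forms ℓ_i(x) = Σ_{j=1}^n L_{ij}·x_j + b_i and the map F : ℝ^n → ℝ^n by F(x)_i = max(0, ℓ_i(x)). Fix a subset I ⊆ {1, …, n} and let M_I be the square matrix indexed by I with entries (M_I)_{ij} = L_{ij} for i ≠ j and (M_I)_{ii} = L_{ii} − 1. If det(M_I) ≠ 0, then there is at most one x ∈ ℝ^n satisfying simultaneously: F(x) = x, ℓ_i(x) ≥ 0 for all i ∈ I, and ℓ_j(x) ≤ 0 for all j ∉ I. -/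
theorem at_most_one_fixed_point_in_region (n : ℕ) (hn : 1 ≤ n)
    (L : Matrix (Fin n) (Fin n) ℝ) (b : Fin n → ℝ) (I : Finset (Fin n))
    (hdet : (Matrix.of (fun i j : {i // i ∈ I} =>
      if (i : Fin n) = (j : Fin n) then L i i - 1 else L i j)).det ≠ 0) :
    ∀ x y : Fin n → ℝ,
      ((∀ i, max 0 (∑ j, L i j * x j + b i) = x i) ∧
       (∀ i ∈ I, 0 ≤ ∑ j, L i j * x j + b i) ∧
       (∀ i ∉ I, ∑ j, L i j * x j + b i ≤ 0)) →
      ((∀ i, max 0 (∑ j, L i j * y j + b i) = y i) ∧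
       (∀ i ∈ I, 0 ≤ ∑ j, L i j * y j + b i) ∧
       (∀ i ∉ I, ∑ j, L i j * y j + b i ≤ 0)) →
      x = y := by
  intro x y ⟨hx1, hx2, hx3⟩ ⟨hy1, hy2, hy3⟩
  have hxI : ∀ i ∈ I, x i = ∑ j, L i j * x j + b i := fun i hi => by
    rw [← hx1 i, max_eq_right (hx2 i hi)]
  have hxN : ∀ i ∉ I, x i = 0 := fun i hi => by
    rw [← hx1 i, max_eq_left (hx3 i hi)]
  have hyI : ∀ i ∈ I, y i = ∑ j, L i j * y j + b i := fun i hi => by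
    rw [← hy1 i, max_eq_right (hy2 i hi)]
  have hyN : ∀ i ∉ I, y i = 0 := fun i hi => by
    rw [← hy1 i, max_eq_left (hy3 i hi)]
  set M := Matrix.of (fun i j : {i // i ∈ I} =>
    if (i : Fin n) = (j : Fin n) then L i i - 1 else L i j) with hM
  have hdiff0 : ∀ j, j ∉ I → x j - y j = 0 := fun j hj => by
    rw [hxN j hj, hyN j hj, sub_zero]
  set d : {i // i ∈ I} → ℝ := fun i => x i - y i with hd
  have hMd : M.mulVec d = 0 := by
    funext i
    have hfull : ∑ j, L (i : Fin n) j * (x j - y j) = x i - y i := by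
      have h1 : ∑ j, L (i : Fin n) j * (x j - y j)
          = ∑ j, L (i : Fin n) j * x j - ∑ j, L (i : Fin n) j * y j := by
        rw [← Finset.sum_sub_distrib]
        exact Finset.sum_congr rfl (fun j _ => by ring)
      rw [h1, show (∑ j, L (i : Fin n) j * x j) - ∑ j, L (i : Fin n) j * y j
        = (∑ j, L (i : Fin n) j * x j + b i) - (∑ j, L (i : Fin n) j * y j + b i) by ring,
        ← hxI i i.2, ← hyI i i.2]
    have hsub : ∑ j : {j // j ∈ I}, L (i : Fin n) j * (x j - y j)
        = ∑ j, L (i : Fin n) j * (x j - y j) := by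
      rw [← Finset.sum_subtype I (fun j => Iff.rfl) (fun j => L (i : Fin n) j * (x j - y j))]
      exact Finset.sum_subset (Finset.subset_univ I) (fun j _ hj => by
        rw [hdiff0 j hj, mul_zero])
    have hterm : ∀ j : {j // j ∈ I},
        (if (i : Fin n) = (j : Fin n) then L (i : Fin n) (i : Fin n) - 1 else L (i : Fin n) j)
          * (x j - y j)
        = L (i : Fin n) j * (x j - y j) - (if i = j then x (j : Fin n) - y j else 0) := by
      intro j
      by_cases h : i = j
      · subst h; simp; ring
      · have h' : (i : Fin n) ≠ (j : Fin n) := fun hc => h (Subtype.ext hc)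
        simp [h, h']
    have : M.mulVec d i = (∑ j : {j // j ∈ I}, L (i : Fin n) j * (x j - y j)) - (x i - y i) := by
      simp only [Matrix.mulVec, dotProduct, hM, Matrix.of_apply, hd]
      rw [Finset.sum_congr rfl (fun j _ => hterm j), Finset.sum_sub_distrib]
      congr 1
      simp
    rw [this, hsub, hfull, sub_self]
    rfl
  have hinv : Invertible M := M.invertibleOfIsUnitDet (isUnit_iff_ne_zero.mpr hdet)
  have hd0 : d = 0 := by
    have := M.mulVec_injective_of_invertible
    apply this
    rw [hMd, Matrix.mulVec_zero]
  funext i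
  by_cases hi : i ∈ I
  · have := congrFun hd0 ⟨i, hi⟩
    simpa [hd, sub_eq_zero] using this
  · rw [hxN i hi, hyN i hi]
end
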